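/- Let 𝓒 and 𝓓 be abelian categories, let 𝓒' ⊆ 𝓒 and 𝓓' ⊆ 𝓓 be full abelian subcategories with inclusion functors i_𝓒 : 𝓒' → 𝓒 and i_𝓓 : 𝓓' → 𝓓, and let c : 𝓒 → 𝓓 and c' : 𝓒' → 𝓓' be additive functors satisfying c ∘ i_𝓒 = i_𝓓 ∘ c'. Suppose that i_𝓒 and i_𝓓 have left adjoints a_𝓒 and a_𝓓, that a_𝓓 is exact, and that a_𝓓 ∘ c ≅ c' ∘ a_𝓒. If c is exact, then c' is exact. -/

import Mathlib

/-!
Statement 17 (Lemma A.8.1 (4) of the paper): in the setting of full abelian subcategories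
`C' ⊆ C`, `D' ⊆ D` with additive functors `c : C ⥤ D`, `c' : C' ⥤ D'` satisfying
`c ∘ iC ≅ iD ∘ c'`, suppose `iC` and `iD` have left adjoints `aC` and `aD`, `aD` is exact
and `aD ∘ c ≅ c' ∘ aC`. If `c` is exact then `c'` is exact.
-/

open CategoryTheory Limits

universe v₁ v₂ v₃ v₄ u₁ u₂ u₃ u₄

/-- If `ε : R ⋙ L ≅ 𝟭`, `L` and `L ⋙ H` preserve colimits of shape `J`, and the domain of `L`
has colimits of shape `J`, then `H` preserves colimits of shape `J`. -/
lemma aux_colim {A : Type*} [Category A] {B : Type*} [Category B] {E : Type*} [Category E]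
    {J : Type*} [Category J] (L : A ⥤ B) (R : B ⥤ A) (ε : R ⋙ L ≅ 𝟭 B)
    (H : B ⥤ E) [HasColimitsOfShape J A]
    [PreservesColimitsOfShape J L] [PreservesColimitsOfShape J (L ⋙ H)] :
    PreservesColimitsOfShape J H := by
  constructor
  intro F
  constructor
  intro t ht
  let s := colimit.cocone (F ⋙ R)
  have hs : IsColimit (L.mapCocone s) := isColimitOfPreserves L (colimit.isColimit _)
  have hs2 : IsColimit ((L ⋙ H).mapCocone s) :=
    isColimitOfPreserves (L ⋙ H) (colimit.isColimit _)
  let γ : F ≅ (F ⋙ R) ⋙ L :=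
    F.rightUnitor.symm ≪≫ Functor.isoWhiskerLeft F ε.symm ≪≫ (Functor.associator _ _ _).symm
  let t' : Cocone F := (Cocone.precompose γ.hom).obj (L.mapCocone s)
  have ht' : IsColimit t' := (IsColimit.precomposeHomEquiv γ _).symm hs
  have h2 : IsColimit (H.mapCocone t') := by
    refine IsColimit.ofIsoColimit ?_ (Functor.mapCoconePrecompose H).symm
    exact (IsColimit.precomposeHomEquiv (Functor.isoWhiskerRight γ H) _).symm hs2
  exact ⟨h2.ofIsoColimit ((Cocone.functoriality F H).mapIso (ht'.uniqueUpToIso ht))⟩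

theorem stmt_17
    {C : Type u₁} [Category.{v₁} C] [Abelian C]
    {D : Type u₂} [Category.{v₂} D] [Abelian D]
    {C' : Type u₃} [Category.{v₃} C'] [Abelian C']
    {D' : Type u₄} [Category.{v₄} D'] [Abelian D']
    (iC : C' ⥤ C) [iC.Full] [iC.Faithful] [iC.Additive]
    (iD : D' ⥤ D) [iD.Full] [iD.Faithful] [iD.Additive]
    (c : C ⥤ D) [c.Additive] (c' : C' ⥤ D') [c'.Additive]
    (e : iC ⋙ c ≅ c' ⋙ iD)
    (aC : C ⥤ C') (adjC : aC ⊣ iC)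
    (aD : D ⥤ D') (adjD : aD ⊣ iD)
    [PreservesFiniteLimits aD] [PreservesFiniteColimits aD]
    (e' : c ⋙ aD ≅ aC ⋙ c')
    [PreservesFiniteLimits c] [PreservesFiniteColimits c] :
    Nonempty (PreservesFiniteLimits c') ∧ Nonempty (PreservesFiniteColimits c') := by
  -- the counit of `adjD` is an isomorphism since `iD` is fully faithful
  have : PreservesLimits iC := adjC.rightAdjoint_preservesLimits
  have : PreservesColimitsOfSize.{0, 0} aC := adjC.leftAdjoint_preservesColimits
  have hfl : PreservesFiniteLimits (c ⋙ aD) := comp_preservesFiniteLimits c aD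
  have hfc : PreservesFiniteColimits (c ⋙ aD) := comp_preservesFiniteColimits c aD
  -- `c' ≅ iC ⋙ (c ⋙ aD)`
  have eL : iC ⋙ (c ⋙ aD) ≅ c' :=
    (Functor.associator _ _ _).symm ≪≫ Functor.isoWhiskerRight e aD ≪≫ Functor.associator _ _ _
      ≪≫ Functor.isoWhiskerLeft c' (asIso adjD.counit) ≪≫ Functor.rightUnitor c'
  have hiCfl : PreservesFiniteLimits iC := ⟨fun _ _ _ => inferInstance⟩
  have hL : PreservesFiniteLimits (iC ⋙ (c ⋙ aD)) := comp_preservesFiniteLimits _ _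
  refine ⟨⟨preservesFiniteLimits_of_natIso eL⟩, ⟨?_⟩⟩
  -- colimits: use `aC ⋙ c' ≅ c ⋙ aD` and the auxiliary lemma
  constructor
  intro J _ _
  have h1 : PreservesColimitsOfShape J (c ⋙ aD) := hfc.preservesFiniteColimits J
  have h2 : PreservesColimitsOfShape J (aC ⋙ c') := preservesColimitsOfShape_of_natIso e'
  exact aux_colim aC iC (asIso adjC.counit) c'
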